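/- Let P be a symmetric Markov operator on a probability space (Ω, μ). Then for any bounded measurable f: Ω → ℝ and any p ∈ (1,∞), (p-2)²·E|f|^p + 4(p-1)·E[φ_{p/2}(f)·P(φ_{p/2}(f))] ≥ p²·E[φ_{p-1}(f)·Pf], where φ_s(x) = sign(x)|x|^s. -/

import Mathlib

open MeasureTheory

/-- `φ_s(x) = sign(x) · |x|^s`. -/
noncomputable def phi (s x : ℝ) : ℝ := Real.sign x * |x| ^ s

theorem ftc_rpow {v u : ℝ} (c : ℝ) (hv : 0 < v) (hvu : v ≤ u) :
    u ^ c - v ^ c = ∫ t in v..u, c * t ^ (c - 1) := by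
  have hsub : Set.uIcc v u ⊆ Set.Ici v := by
    rw [Set.uIcc_of_le hvu]; exact Set.Icc_subset_Ici_self
  have hderiv : ∀ t ∈ Set.uIcc v u,
      HasDerivAt (fun x => x ^ c) (c * t ^ (c - 1)) t := by
    intro t ht
    have ht0 : (0:ℝ) < t := lt_of_lt_of_le hv (hsub ht)
    simpa [mul_comm] using Real.hasDerivAt_rpow_const (x := t) (p := c) (Or.inl ht0.ne')
  have hint : IntervalIntegrable (fun t => c * t ^ (c - 1)) volume v u := by
    apply ContinuousOn.intervalIntegrable
    apply ContinuousOn.mul continuousOn_const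
    intro t ht
    have ht0 : (0:ℝ) < t := lt_of_lt_of_le hv (hsub ht)
    exact (Real.continuousAt_rpow_const t _ (Or.inl ht0.ne')).continuousWithinAt
  rw [intervalIntegral.integral_eq_sub_of_hasDerivAt hderiv hint]

theorem cs_interval {v u : ℝ} (hvu : v ≤ u) {g : ℝ → ℝ}
    (hg : ContinuousOn g (Set.Icc v u)) (hgpos : ∀ t ∈ Set.Icc v u, 0 ≤ g t) :
    (∫ t in v..u, g t) ^ 2 ≤ (u - v) * ∫ t in v..u, (g t) ^ 2 := by
  have hIoc : Set.Ioc v u ⊆ Set.Icc v u := Set.Ioc_subset_Icc_self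
  set μr := volume.restrict (Set.Ioc v u) with hμr
  have hfin : IsFiniteMeasure μr := by
    constructor
    rw [hμr, Measure.restrict_apply_univ, Real.volume_Ioc]
    exact ENNReal.ofReal_lt_top
  obtain ⟨C, hC⟩ := (isCompact_Icc (a := v) (b := u)).exists_bound_of_continuousOn hg
  have hmeas : AEStronglyMeasurable g μr :=
    (hg.mono hIoc).aestronglyMeasurable measurableSet_Ioc
  have haemem : ∀ᵐ a ∂μr, a ∈ Set.Ioc v u := ae_restrict_mem measurableSet_Ioc
  have hae : ∀ᵐ a ∂μr, ‖g a‖ ≤ C := by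
    filter_upwards [haemem] with a ha; exact hC a (hIoc ha)
  have hmem : MemLp g (ENNReal.ofReal 2) μr := MemLp.of_bound hmeas C hae
  have hmem1 : MemLp (fun _ : ℝ => (1:ℝ)) (ENNReal.ofReal 2) μr := memLp_const 1
  have hpq : (2:ℝ).HolderConjugate 2 := Real.holderConjugate_iff.mpr ⟨one_lt_two, by norm_num⟩
  have hgnn : 0 ≤ᵐ[μr] g := by
    filter_upwards [haemem] with a ha; exact hgpos a (hIoc ha)
  have honen : (0:ℝ → ℝ) ≤ᵐ[μr] (fun _ => 1) := Filter.Eventually.of_forall fun _ => zero_le_one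
  have H := integral_mul_le_Lp_mul_Lq_of_nonneg hpq hgnn honen hmem hmem1
  simp only [mul_one, Real.one_rpow, integral_const] at H
  simp only [show ∀ x:ℝ, x ^ (2:ℝ) = x ^ (2:ℕ) from fun x => by
    rw [← Real.rpow_natCast x 2]; norm_num] at H
  have h1 : (μr Set.univ).toReal = u - v := by
    rw [hμr, Measure.restrict_apply_univ, Real.volume_Ioc,
      ENNReal.toReal_ofReal (sub_nonneg.mpr hvu)]
  rw [measureReal_def, h1] at H
  have hInn : 0 ≤ ∫ a, g a ∂μr := integral_nonneg_of_ae hgnn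
  have hBnn : 0 ≤ ∫ a, (g a) ^ 2 ∂μr := integral_nonneg fun a => sq_nonneg _
  have hLnn : (0:ℝ) ≤ u - v := sub_nonneg.mpr hvu
  have hsqrt : ((∫ a, (g a)^2 ∂μr) ^ ((1:ℝ)/2)) * ((u - v) ^ ((1:ℝ)/2))
      = Real.sqrt ((u - v) * ∫ a, (g a)^2 ∂μr) := by
    rw [Real.sqrt_eq_rpow, Real.mul_rpow hLnn hBnn, mul_comm]
  rw [smul_eq_mul, mul_one] at H
  rw [hsqrt] at H
  have H2 := pow_le_pow_left₀ hInn H 2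
  rw [Real.sq_sqrt (mul_nonneg hLnn hBnn)] at H2
  rw [intervalIntegral.integral_of_le hvu, intervalIntegral.integral_of_le hvu]
  exact H2

theorem sv_pos {p : ℝ} (hp : 1 < p) {u v : ℝ} (hv : 0 < v) (hvu : v ≤ u) :
    4 * (p-1) * (u^(p/2) - v^(p/2))^2 ≤ p^2 * ((u - v) * (u^(p-1) - v^(p-1))) := by
  have hicc : ∀ t ∈ Set.Icc v u, (0:ℝ) < t := fun t ht => lt_of_lt_of_le hv ht.1
  set A := ∫ t in v..u, t ^ (p/2 - 1) with hA
  set B := ∫ t in v..u, t ^ (p - 2) with hB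
  have e1 : u^(p/2) - v^(p/2) = (p/2) * A := by
    rw [hA, ← intervalIntegral.integral_const_mul]
    exact ftc_rpow (p/2) hv hvu
  have e2 : u^(p-1) - v^(p-1) = (p-1) * B := by
    rw [hB, ← intervalIntegral.integral_const_mul]
    have := ftc_rpow (p-1) hv hvu
    rw [show p - 1 - 1 = p - 2 by ring] at this
    exact this
  have hgc : ContinuousOn (fun t : ℝ => t ^ (p/2 - 1)) (Set.Icc v u) := fun t ht =>
    (Real.continuousAt_rpow_const t _ (Or.inl (hicc t ht).ne')).continuousWithinAt
  have hgpos : ∀ t ∈ Set.Icc v u, (0:ℝ) ≤ t ^ (p/2 - 1) := fun t ht =>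
    Real.rpow_nonneg (hicc t ht).le _
  have hcs := cs_interval hvu hgc hgpos
  have hsq : ∀ t ∈ Set.uIcc v u, (fun t : ℝ => (t ^ (p/2-1))^2) t = (fun t : ℝ => t ^ (p-2)) t := by
    intro t ht
    rw [Set.uIcc_of_le hvu] at ht
    have ht0 := hicc t ht
    simp only
    rw [← Real.rpow_natCast (t ^ (p/2-1)) 2, ← Real.rpow_mul ht0.le]
    norm_num
    ring_nf
  rw [intervalIntegral.integral_congr hsq] at hcs
  -- hcs : A ^ 2 ≤ (u - v) * B
  have hfac : (0:ℝ) ≤ (p-1) * p^2 := mul_nonneg (by linarith) (sq_nonneg p)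
  calc 4 * (p-1) * (u^(p/2) - v^(p/2))^2 = (p-1)*p^2 * A^2 := by rw [e1]; ring
    _ ≤ (p-1)*p^2 * ((u-v)*B) := mul_le_mul_of_nonneg_left hcs hfac
    _ = p^2 * ((u - v) * (u^(p-1) - v^(p-1))) := by rw [e2]; ring

theorem case_same {p : ℝ} (hp : 1 < p) {u v : ℝ} (hu : 0 < u) (hv : 0 < v) :
    p^2 * (u * v^(p-1) + u^(p-1) * v) ≤ (p-2)^2 * (u^p + v^p) + 8*(p-1) * (u^(p/2) * v^(p/2)) := by
  have huu : u * u^(p-1) = u^p := by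
    calc u * u^(p-1) = u^(1:ℝ) * u^(p-1) := by rw [Real.rpow_one]
      _ = u^(1+(p-1)) := (Real.rpow_add hu _ _).symm
      _ = u^p := by ring_nf
  have hvv : v * v^(p-1) = v^p := by
    calc v * v^(p-1) = v^(1:ℝ) * v^(p-1) := by rw [Real.rpow_one]
      _ = v^(1+(p-1)) := (Real.rpow_add hv _ _).symm
      _ = v^p := by ring_nf
  have hup : u^(p/2) * u^(p/2) = u^p := by
    rw [← Real.rpow_add hu]; ring_nf
  have hvp : v^(p/2) * v^(p/2) = v^p := by
    rw [← Real.rpow_add hv]; ring_nf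
  rcases le_total v u with h | h
  · have hsv := sv_pos hp hv h
    have goal_eq : (p-2)^2*(u^p+v^p) + 8*(p-1)*(u^(p/2)*v^(p/2)) - p^2*(u*v^(p-1)+u^(p-1)*v)
        = p^2*((u-v)*(u^(p-1)-v^(p-1))) - 4*(p-1)*(u^(p/2)-v^(p/2))^2 := by
      linear_combination (-(p^2)) * huu + (-(p^2)) * hvv + (4*(p-1)) * hup + (4*(p-1)) * hvp
    linarith [hsv, goal_eq]
  · have hsv := sv_pos hp hu h
    have goal_eq : (p-2)^2*(u^p+v^p) + 8*(p-1)*(u^(p/2)*v^(p/2)) - p^2*(u*v^(p-1)+u^(p-1)*v)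
        = p^2*((v-u)*(v^(p-1)-u^(p-1))) - 4*(p-1)*(v^(p/2)-u^(p/2))^2 := by
      linear_combination (-(p^2)) * huu + (-(p^2)) * hvv + (4*(p-1)) * hup + (4*(p-1)) * hvp
    linarith [hsv, goal_eq]

theorem case_opp {p : ℝ} (hp : 1 < p) {u v : ℝ} (hu : 0 < u) (hv : 0 < v) :
    p^2 * (-(u * v^(p-1) + u^(p-1) * v)) ≤ (p-2)^2 * (u^p + v^p) - 8*(p-1) * (u^(p/2) * v^(p/2)) := by
  have hup : u^(p/2) * u^(p/2) = u^p := by rw [← Real.rpow_add hu]; ring_nf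
  have hvp : v^(p/2) * v^(p/2) = v^p := by rw [← Real.rpow_add hv]; ring_nf
  have hY : (0:ℝ) ≤ u^(p/2) * v^(p/2) :=
    mul_nonneg (Real.rpow_nonneg hu.le _) (Real.rpow_nonneg hv.le _)
  have h2Ya : 2 * (u^(p/2) * v^(p/2)) ≤ u^p + v^p := by
    nlinarith [sq_nonneg (u^(p/2) - v^(p/2)), hup, hvp]
  have g1 : (u^((1:ℝ)/2))^2 * (v^((p-1)/2))^2 = u * v^(p-1) := by
    rw [sq, sq, ← Real.rpow_add hu, ← Real.rpow_add hv,
      show (1:ℝ)/2 + 1/2 = 1 by norm_num, show (p-1)/2 + (p-1)/2 = p - 1 by ring, Real.rpow_one]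
  have g2 : (u^((p-1)/2))^2 * (v^((1:ℝ)/2))^2 = u^(p-1) * v := by
    rw [sq, sq, ← Real.rpow_add hu, ← Real.rpow_add hv,
      show (1:ℝ)/2 + 1/2 = 1 by norm_num, show (p-1)/2 + (p-1)/2 = p - 1 by ring, Real.rpow_one]
  have f7 : u^((1:ℝ)/2) * u^((p-1)/2) * (v^((1:ℝ)/2) * v^((p-1)/2)) = u^(p/2) * v^(p/2) := by
    rw [← Real.rpow_add hu, ← Real.rpow_add hv, show (1:ℝ)/2 + (p-1)/2 = p/2 by ring]
  have h2Yb : 2 * (u^(p/2) * v^(p/2)) ≤ u * v^(p-1) + u^(p-1) * v := by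
    nlinarith [sq_nonneg (u^((1:ℝ)/2) * v^((p-1)/2) - u^((p-1)/2) * v^((1:ℝ)/2)), g1, g2, f7]
  nlinarith [mul_nonneg (sq_nonneg (p-2)) (by linarith : (0:ℝ) ≤ u^p + v^p - 2*(u^(p/2)*v^(p/2))),
    mul_nonneg (sq_nonneg p) (by linarith : (0:ℝ) ≤ u*v^(p-1) + u^(p-1)*v - 2*(u^(p/2)*v^(p/2))),
    mul_nonneg (sq_nonneg (p-2)) hY]

theorem key_ineq {p : ℝ} (hp : 1 < p) (a b : ℝ) :
    p^2 * (a * phi (p-1) b + phi (p-1) a * b) ≤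
      (p-2)^2 * (|a|^p + |b|^p) + 8*(p-1) * (phi (p/2) a * phi (p/2) b) := by
  have hp0 : p ≠ 0 := by intro h; rw [h] at hp; linarith
  rcases lt_trichotomy a 0 with ha | rfl | ha
  · rcases lt_trichotomy b 0 with hb | rfl | hb
    · simp only [phi, Real.sign_of_neg ha, Real.sign_of_neg hb, abs_of_neg ha, abs_of_neg hb,
        neg_one_mul]
      linarith [case_same hp (neg_pos.mpr ha) (neg_pos.mpr hb)]
    · simp only [phi, Real.sign_zero, zero_mul, mul_zero, abs_zero, Real.zero_rpow hp0,
        add_zero, zero_add, mul_zero]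
      positivity
    · simp only [phi, Real.sign_of_neg ha, Real.sign_of_pos hb, abs_of_neg ha, abs_of_pos hb,
        neg_one_mul, one_mul]
      linarith [case_opp hp (neg_pos.mpr ha) hb]
  · simp only [phi, Real.sign_zero, zero_mul, mul_zero, abs_zero, Real.zero_rpow hp0,
      add_zero, zero_add, mul_zero]
    positivity
  · rcases lt_trichotomy b 0 with hb | rfl | hb
    · simp only [phi, Real.sign_of_pos ha, Real.sign_of_neg hb, abs_of_pos ha, abs_of_neg hb,
        neg_one_mul, one_mul]
      linarith [case_opp hp ha (neg_pos.mpr hb)]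
    · simp only [phi, Real.sign_zero, zero_mul, mul_zero, abs_zero, Real.zero_rpow hp0,
        add_zero, zero_add, mul_zero]
      positivity
    · simp only [phi, Real.sign_of_pos ha, Real.sign_of_pos hb, abs_of_pos ha, abs_of_pos hb,
        one_mul]
      linarith [case_same hp ha hb]

theorem measurable_sign' : Measurable Real.sign := by
  have h : Real.sign = fun r : ℝ => if r < 0 then (-1:ℝ) else if 0 < r then 1 else 0 := by
    funext r; rfl
  rw [h]
  exact Measurable.ite (measurableSet_lt measurable_id measurable_const) measurable_const
    (Measurable.ite (measurableSet_lt measurable_const measurable_id) measurable_const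
      measurable_const)

theorem phi_measurable {s : ℝ} (hs : 0 ≤ s) : Measurable (phi s) :=
  measurable_sign'.mul ((continuous_abs.rpow_const fun _ => Or.inr hs).measurable)

theorem phi_abs_le {s : ℝ} (hs : 0 ≤ s) {a C : ℝ} (h : |a| ≤ C) : |phi s a| ≤ C ^ s := by
  have h1 : |phi s a| ≤ |a| ^ s := by
    rw [phi, abs_mul, abs_of_nonneg (Real.rpow_nonneg (abs_nonneg a) s)]
    have : |Real.sign a| ≤ 1 := by
      rcases Real.sign_apply_eq a with h' | h' | h' <;> simp [h']
    nlinarith [Real.rpow_nonneg (abs_nonneg a) s]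
  exact h1.trans (Real.rpow_le_rpow (abs_nonneg a) h hs)

theorem stmt_14 {Ω : Type*} [MeasurableSpace Ω] (μ : Measure Ω) [IsProbabilityMeasure μ]
    (P : (Ω → ℝ) →ₗ[ℝ] (Ω → ℝ))
    -- P is a symmetric Markov operator:
    (hone : P (fun _ => 1) = fun _ => 1)
    (hpos : ∀ f : Ω → ℝ, (∀ x, 0 ≤ f x) → ∀ x, 0 ≤ P f x)
    (hmeas : ∀ f : Ω → ℝ, Measurable f → Measurable (P f))
    (hsym : ∀ f g : Ω → ℝ, ∫ x, f x * P g x ∂μ = ∫ x, g x * P f x ∂μ)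
    (p : ℝ) (hp : 1 < p)
    (f : Ω → ℝ) (hf : Measurable f) (M : ℝ) (hbdd : ∀ x, |f x| ≤ M) :
    p ^ 2 * ∫ x, phi (p - 1) (f x) * P f x ∂μ ≤
      (p - 2) ^ 2 * ∫ x, |f x| ^ p ∂μ +
        4 * (p - 1) * ∫ x, phi (p / 2) (f x) * P (fun y => phi (p / 2) (f y)) x ∂μ := by
  -- basic bounds
  have hbdd' : ∀ x, |f x| ≤ |M| := fun x => (hbdd x).trans (le_abs_self M)
  have hM : (0:ℝ) ≤ |M| := abs_nonneg M
  -- P preserves bounds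
  have hPconst : ∀ C : ℝ, P (fun _ => C) = fun _ => C := by
    intro C
    have h1 : (fun _ : Ω => C) = C • (fun _ : Ω => (1:ℝ)) := by funext y; simp
    rw [h1, _root_.map_smul, hone]
  have hPbdd : ∀ (g : Ω → ℝ) (C : ℝ), (∀ x, |g x| ≤ C) → ∀ x, |P g x| ≤ C := by
    intro g C hg x
    have hub := hpos ((fun _ => C) - g) (fun y => sub_nonneg.mpr (abs_le.mp (hg y)).2) x
    have hlb := hpos ((fun _ => C) + g) (fun y => by have := (abs_le.mp (hg y)).1; dsimp; linarith) x
    rw [map_sub, hPconst C] at hub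
    rw [map_add, hPconst C] at hlb
    simp only [Pi.sub_apply, Pi.add_apply] at hub hlb
    exact abs_le.mpr ⟨by linarith, by linarith⟩
  -- integrability of bounded measurable functions
  have hint : ∀ (g : Ω → ℝ), Measurable g → (∃ C, ∀ x, |g x| ≤ C) → Integrable g μ := by
    rintro g hgm ⟨C, hC⟩
    exact (integrable_const C).mono' hgm.aestronglyMeasurable
      (Filter.Eventually.of_forall fun x => by simpa [Real.norm_eq_abs] using hC x)
  -- the auxiliary functions
  set gp : Ω → ℝ := fun y => |f y| ^ p with hgp
  set gh : Ω → ℝ := fun y => phi (p/2) (f y) with hgh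
  set g1 : Ω → ℝ := fun y => phi (p-1) (f y) with hg1
  have hp2 : (0:ℝ) ≤ p/2 := by linarith
  have hp1 : (0:ℝ) ≤ p-1 := by linarith
  have hpn : (0:ℝ) ≤ p := by linarith
  have hgpm : Measurable gp := (continuous_abs.rpow_const fun _ => Or.inr hpn).measurable.comp hf
  have hghm : Measurable gh := (phi_measurable hp2).comp hf
  have hg1m : Measurable g1 := (phi_measurable hp1).comp hf
  have hgpb : ∀ x, |gp x| ≤ |M| ^ p := fun x => by
    rw [hgp, abs_of_nonneg (Real.rpow_nonneg (abs_nonneg _) _)]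
    exact Real.rpow_le_rpow (abs_nonneg _) (hbdd' x) hpn
  have hghb : ∀ x, |gh x| ≤ |M| ^ (p/2) := fun x => phi_abs_le hp2 (hbdd' x)
  have hg1b : ∀ x, |g1 x| ≤ |M| ^ (p-1) := fun x => phi_abs_le hp1 (hbdd' x)
  -- pointwise inequality after applying P
  have hx : ∀ x, 0 ≤ (p-2)^2 * (|f x|^p + P gp x) + 8*(p-1) * (phi (p/2) (f x) * P gh x)
      - p^2 * (f x * P g1 x + phi (p-1) (f x) * P f x) := by
    intro x
    have hnn : ∀ y, 0 ≤ (((p-2)^2 * |f x|^p) • (fun _ : Ω => (1:ℝ)) + ((p-2)^2) • gp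
        + (8*(p-1) * phi (p/2) (f x)) • gh
        - ((p^2 * f x) • g1 + (p^2 * phi (p-1) (f x)) • f)) y := by
      intro y
      have h := key_ineq hp (f x) (f y)
      simp only [Pi.sub_apply, Pi.add_apply, Pi.smul_apply, smul_eq_mul, hgp, hgh, hg1]
      nlinarith [h]
    have h0 := hpos _ hnn x
    simp only [map_sub, map_add, _root_.map_smul, hone, Pi.sub_apply, Pi.add_apply,
      Pi.smul_apply, smul_eq_mul, mul_one] at h0
    linarith
  -- integrability of all pieces
  have hPf_b : ∀ x, |P f x| ≤ |M| := hPbdd f _ hbdd'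
  have hPgp_b := hPbdd gp _ hgpb
  have hPgh_b := hPbdd gh _ hghb
  have hPg1_b := hPbdd g1 _ hg1b
  have hprod : ∀ (g h : Ω → ℝ) (Cg Ch : ℝ), Measurable g → Measurable h →
      (∀ x, |g x| ≤ Cg) → (∀ x, |h x| ≤ Ch) → Integrable (fun x => g x * h x) μ := by
    intro g h Cg Ch hgm hhm hgC hhC
    refine hint _ (hgm.mul hhm) ⟨Cg * Ch, fun x => ?_⟩
    rw [abs_mul]
    exact mul_le_mul (hgC x) (hhC x) (abs_nonneg _) ((abs_nonneg _).trans (hgC x))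
  have i1 : Integrable (fun x => g1 x * P f x) μ :=
    hprod g1 (P f) _ _ hg1m (hmeas f hf) hg1b hPf_b
  have i2 : Integrable (fun x => gp x) μ := hint gp hgpm ⟨_, hgpb⟩
  have i3 : Integrable (fun x => gh x * P gh x) μ :=
    hprod gh (P gh) _ _ hghm (hmeas gh hghm) hghb hPgh_b
  have i4 : Integrable (fun x => f x * P g1 x) μ :=
    hprod f (P g1) _ _ hf (hmeas g1 hg1m) hbdd' hPg1_b
  have i5 : Integrable (fun x => P gp x) μ := hint _ (hmeas gp hgpm) ⟨_, hPgp_b⟩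
  -- integrate the pointwise inequality
  have hInt : 0 ≤ ∫ x, ((p-2)^2 * (gp x + P gp x) + 8*(p-1) * (gh x * P gh x)
      - p^2 * (f x * P g1 x + g1 x * P f x)) ∂μ := integral_nonneg fun x => hx x
  have ha : Integrable (fun x => (p-2)^2 * (gp x + P gp x) + 8*(p-1) * (gh x * P gh x)) μ :=
    ((i2.add i5).const_mul _).add (i3.const_mul _)
  have hb : Integrable (fun x => p^2 * (f x * P g1 x + g1 x * P f x)) μ :=
    (i4.add i1).const_mul _
  have ia : Integrable (fun x => gp x + P gp x) μ := i2.add i5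
  have ib : Integrable (fun x => f x * P g1 x + g1 x * P f x) μ := i4.add i1
  have ha1 : Integrable (fun x => (p-2)^2 * (gp x + P gp x)) μ := ia.const_mul _
  have ha2 : Integrable (fun x => 8*(p-1) * (gh x * P gh x)) μ := i3.const_mul _
  rw [integral_sub ha hb, integral_add ha1 ha2,
    integral_const_mul, integral_const_mul, integral_const_mul,
    integral_add i2 i5, integral_add i4 i1] at hInt
  -- symmetry identities
  have e5 : ∫ x, P gp x ∂μ = ∫ x, gp x ∂μ := by
    have h := hsym (fun _ => 1) gp
    rw [hone] at h
    simpa using h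
  have e4 : ∫ x, f x * P g1 x ∂μ = ∫ x, g1 x * P f x ∂μ := hsym f g1
  rw [e5, e4] at hInt
  have k1 : (∫ x, phi (p - 1) (f x) * P f x ∂μ) = ∫ x, g1 x * P f x ∂μ := rfl
  have k3 : (∫ x, phi (p / 2) (f x) * P gh x ∂μ) = ∫ x, gh x * P gh x ∂μ := rfl
  have k2 : (∫ x, |f x| ^ p ∂μ) = ∫ x, gp x ∂μ := rfl
  rw [k1, k3, k2]
  linarith
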